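/- If 1/2 < C_1 ≤ C_2 and ρ_{12} = 0, then for every Q in P_I(C_1) with Q < 1, P_cor^opt(Q) = ρ_{11}C_1 + ρ_{22}C_2 − C_1Q; equivalently, R_cor^opt(Q) = P_cor^opt(Q)/(1−Q) = C_1 + ρ_{22}(C_2−C_1)/(1−Q). -/

import Mathlib

open Matrix ComplexOrder

noncomputable section

namespace FRIR

/-- A three-outcome POVM on a qubit: `M₀` is the inconclusive outcome. -/
def IsPOVM (M₀ M₁ M₂ : Matrix (Fin 2) (Fin 2) ℂ) : Prop :=
  M₀.PosSemidef ∧ M₁.PosSemidef ∧ M₂.PosSemidef ∧ M₀ + M₁ + M₂ = 1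

/-- `ρ₀ = q₁ρ₁ + q₂ρ₂`. -/
def rho0 (q₁ q₂ : ℝ) (ρ₁ ρ₂ : Matrix (Fin 2) (Fin 2) ℂ) : Matrix (Fin 2) (Fin 2) ℂ :=
  (q₁ : ℂ) • ρ₁ + (q₂ : ℂ) • ρ₂

/-- The probability of the inconclusive result, `P_I = tr(ρ₀M₀)`. -/
def PIof (q₁ q₂ : ℝ) (ρ₁ ρ₂ M₀ : Matrix (Fin 2) (Fin 2) ℂ) : ℝ :=
  (Matrix.trace (rho0 q₁ q₂ ρ₁ ρ₂ * M₀)).re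

/-- `P_cor = q₁tr(ρ₁M₁) + q₂tr(ρ₂M₂)`. -/
def Pcor (q₁ q₂ : ℝ) (ρ₁ ρ₂ M₁ M₂ : Matrix (Fin 2) (Fin 2) ℂ) : ℝ :=
  q₁ * (Matrix.trace (ρ₁ * M₁)).re + q₂ * (Matrix.trace (ρ₂ * M₂)).re

/-- `P̄_cor = q·tr(ρ₀M₀) + q₁tr(ρ₁M₁) + q₂tr(ρ₂M₂)`. -/
def PbarCor (q q₁ q₂ : ℝ) (ρ₁ ρ₂ M₀ M₁ M₂ : Matrix (Fin 2) (Fin 2) ℂ) : ℝ :=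
  q * PIof q₁ q₂ ρ₁ ρ₂ M₀ + Pcor q₁ q₂ ρ₁ ρ₂ M₁ M₂

/-- `P̄_cor^opt(q)`: the maximal value of `P̄_cor` over all POVMs. -/
def PbarOpt (q q₁ q₂ : ℝ) (ρ₁ ρ₂ : Matrix (Fin 2) (Fin 2) ℂ) : ℝ :=
  sSup {x : ℝ | ∃ M₀ M₁ M₂, IsPOVM M₀ M₁ M₂ ∧ PbarCor q q₁ q₂ ρ₁ ρ₂ M₀ M₁ M₂ = x}

/-- `P_cor^opt(Q)`: the maximal value of `P_cor` over POVMs with `P_I = Q`. -/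
def PcorOpt (Q q₁ q₂ : ℝ) (ρ₁ ρ₂ : Matrix (Fin 2) (Fin 2) ℂ) : ℝ :=
  sSup {x : ℝ | ∃ M₀ M₁ M₂, IsPOVM M₀ M₁ M₂ ∧
    PIof q₁ q₂ ρ₁ ρ₂ M₀ = Q ∧ Pcor q₁ q₂ ρ₁ ρ₂ M₁ M₂ = x}

/-- `P_I(q) = { tr(ρ₀M₀) : POVMs attaining P̄_cor^opt(q) }`. -/
def PIset (q q₁ q₂ : ℝ) (ρ₁ ρ₂ : Matrix (Fin 2) (Fin 2) ℂ) : Set ℝ :=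
  {Q : ℝ | ∃ M₀ M₁ M₂, IsPOVM M₀ M₁ M₂ ∧
    PbarCor q q₁ q₂ ρ₁ ρ₂ M₀ M₁ M₂ = PbarOpt q q₁ q₂ ρ₁ ρ₂ ∧ PIof q₁ q₂ ρ₁ ρ₂ M₀ = Q}

/-- `q₀⁽⁰⁾ = sup{q > 0 : 0 ∈ P_I(q)}`. -/
def q0low (q₁ q₂ : ℝ) (ρ₁ ρ₂ : Matrix (Fin 2) (Fin 2) ℂ) : ℝ :=
  sSup {q : ℝ | 0 < q ∧ (0 : ℝ) ∈ PIset q q₁ q₂ ρ₁ ρ₂}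

/-- `q₀⁽¹⁾ = inf{q > 0 : 1 ∈ P_I(q)}`. -/
def q0high (q₁ q₂ : ℝ) (ρ₁ ρ₂ : Matrix (Fin 2) (Fin 2) ℂ) : ℝ :=
  sInf {q : ℝ | 0 < q ∧ (1 : ℝ) ∈ PIset q q₁ q₂ ρ₁ ρ₂}

-- ### auxiliary lemmas

lemma trace_vmv_mul' (a b : Fin 2 → ℂ) (A : Matrix (Fin 2) (Fin 2) ℂ) :
    Matrix.trace (vecMulVec a b * A) = b ⬝ᵥ (A *ᵥ a) := by
  simp [Matrix.trace, Matrix.mul_apply, vecMulVec_apply, dotProduct, mulVec,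
    Fin.sum_univ_two, Matrix.diag]
  ring

lemma trace_vmv' (a b : Fin 2 → ℂ) : Matrix.trace (vecMulVec a b) = b ⬝ᵥ a := by
  simp [Matrix.trace, vecMulVec_apply, dotProduct, Fin.sum_univ_two, Matrix.diag]
  ring

lemma vmv_mul_vmv' (a b c d : Fin 2 → ℂ) :
    vecMulVec a b * vecMulVec c d = (b ⬝ᵥ c) • vecMulVec a d := by
  ext i j
  simp [Matrix.mul_apply, vecMulVec_apply, dotProduct, Fin.sum_univ_two]
  ring

lemma vmv_mul_mul_vmv' (a b c d : Fin 2 → ℂ) (A : Matrix (Fin 2) (Fin 2) ℂ) :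
    vecMulVec a b * A * vecMulVec c d = (b ⬝ᵥ (A *ᵥ c)) • vecMulVec a d := by
  ext i j
  simp [Matrix.mul_apply, vecMulVec_apply, dotProduct, mulVec, Fin.sum_univ_two]
  ring

lemma psd_vmv' (v : Fin 2 → ℂ) : (vecMulVec v (star v)).PosSemidef := by
  refine Matrix.PosSemidef.of_dotProduct_mulVec_nonneg ?_ ?_
  · ext i j
    simp [conjTranspose_apply, vecMulVec_apply, mul_comm]
  · intro x
    have h : star x ⬝ᵥ (vecMulVec v (star v) *ᵥ x) =
        star (star v ⬝ᵥ x) * (star v ⬝ᵥ x) := by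
      simp [vecMulVec_apply, dotProduct, mulVec, Fin.sum_univ_two, mul_add, add_mul]
      ring
    rw [h]
    exact star_mul_self_nonneg _

lemma psd_smul' {A : Matrix (Fin 2) (Fin 2) ℂ} (hA : A.PosSemidef) {r : ℝ} (hr : 0 ≤ r) :
    ((r : ℂ) • A).PosSemidef := by
  refine Matrix.PosSemidef.of_dotProduct_mulVec_nonneg ?_ ?_
  · ext i j
    simp [conjTranspose_apply, hA.1.apply]
  · intro x
    have h : star x ⬝ᵥ (((r : ℂ) • A) *ᵥ x) = (r : ℂ) * (star x ⬝ᵥ (A *ᵥ x)) := by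
      simp [smul_mulVec, dotProduct_smul]
      ring
    rw [h]
    exact mul_nonneg (by exact_mod_cast hr) (hA.dotProduct_mulVec_nonneg x)

lemma psd_trace_re_nonneg' {A : Matrix (Fin 2) (Fin 2) ℂ} (hA : A.PosSemidef) :
    0 ≤ (Matrix.trace A).re := by
  have h0 := hA.re_dotProduct_nonneg (Pi.single 0 1)
  have h1 := hA.re_dotProduct_nonneg (Pi.single 1 1)
  simp [dotProduct, mulVec, Fin.sum_univ_two, Pi.single_apply] at h0 h1
  simp only [Matrix.trace, Fin.sum_univ_two, Matrix.diag, Complex.add_re]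
  linarith

open scoped MatrixOrder in
lemma trace_mul_psd_re_nonneg' {A B : Matrix (Fin 2) (Fin 2) ℂ}
    (hA : A.PosSemidef) (hB : B.PosSemidef) :
    0 ≤ (Matrix.trace (A * B)).re := by
  have h1 : A * B = CFC.sqrt A * (CFC.sqrt A * B) := by
    rw [← Matrix.mul_assoc, CFC.sqrt_mul_sqrt_self A hA.nonneg]
  have h2 : Matrix.trace (A * B) = Matrix.trace (CFC.sqrt A * B * CFC.sqrt A) := by
    rw [h1, Matrix.trace_mul_comm, Matrix.mul_assoc]
  rw [h2]
  have h3 : (CFC.sqrt A * B * CFC.sqrt A).PosSemidef := by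
    have := hB.conjTranspose_mul_mul_same (CFC.sqrt A)
    rwa [(CFC.sqrt_nonneg A).posSemidef.isHermitian.eq] at this
  exact psd_trace_re_nonneg' h3

lemma resolution' (ν₁ ν₂ : Fin 2 → ℂ)
    (hν₁ : star ν₁ ⬝ᵥ ν₁ = 1) (hν₂ : star ν₂ ⬝ᵥ ν₂ = 1) (hν₁₂ : star ν₁ ⬝ᵥ ν₂ = 0) :
    vecMulVec ν₁ (star ν₁) + vecMulVec ν₂ (star ν₂) = 1 := by
  set U : Matrix (Fin 2) (Fin 2) ℂ := Matrix.of (fun i j => if j = 0 then ν₁ i else ν₂ i) with hU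
  have hUU : Uᴴ * U = 1 := by
    ext i j
    fin_cases i <;> fin_cases j <;>
      simp only [Matrix.mul_apply, conjTranspose_apply, hU, Matrix.of_apply,
        Fin.sum_univ_two, Matrix.one_apply] <;>
      simp_all [dotProduct, Fin.sum_univ_two]
    · have := congrArg (starRingEnd ℂ) hν₁₂
      simpa [dotProduct, Fin.sum_univ_two, mul_comm] using this
  have hUU' : U * Uᴴ = 1 := mul_eq_one_comm.mp hUU
  calc vecMulVec ν₁ (star ν₁) + vecMulVec ν₂ (star ν₂) = U * Uᴴ := by
        ext i j
        simp [Matrix.mul_apply, conjTranspose_apply, hU, vecMulVec_apply,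
          Fin.sum_univ_two, mul_comm]
    _ = 1 := hUU'

/-- If `1/2 < C₁ ≤ C₂` and `ρ₁₂ = 0`, then for every
`Q ∈ P_I(C₁)` with `Q < 1`, `P_cor^opt(Q) = ρ₁₁C₁ + ρ₂₂C₂ − C₁Q`, i.e.
`R_cor^opt(Q) = C₁ + ρ₂₂(C₂−C₁)/(1−Q)`. -/
theorem stmt11
    (q₁ q₂ : ℝ) (ρ₁ ρ₂ : Matrix (Fin 2) (Fin 2) ℂ)
    (hq₁ : 0 < q₁) (hq₂ : 0 < q₂) (hq : q₁ + q₂ = 1)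
    (hρ₁ : ρ₁.PosSemidef) (htr₁ : ρ₁.trace = 1)
    (hρ₂ : ρ₂.PosSemidef) (htr₂ : ρ₂.trace = 1)
    (hρ0 : (rho0 q₁ q₂ ρ₁ ρ₂).PosDef)
    (S : Matrix (Fin 2) (Fin 2) ℂ) (hS : S.PosSemidef) (hSS : S * S = rho0 q₁ q₂ ρ₁ ρ₂)
    (ν₁ ν₂ : Fin 2 → ℂ)
    (hν₁ : star ν₁ ⬝ᵥ ν₁ = 1) (hν₂ : star ν₂ ⬝ᵥ ν₂ = 1) (hν₁₂ : star ν₁ ⬝ᵥ ν₂ = 0)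
    (C₁ C₂ : ℝ) (hC12 : C₁ ≤ C₂) (hCsum : 1 < C₁ + C₂)
    (hbar₁ : S * ((C₁ : ℂ) • vecMulVec ν₁ (star ν₁)
        + ((1 - C₂ : ℝ) : ℂ) • vecMulVec ν₂ (star ν₂)) * S = (q₁ : ℂ) • ρ₁)
    (hbar₂ : S * (((1 - C₁ : ℝ) : ℂ) • vecMulVec ν₁ (star ν₁)
        + (C₂ : ℂ) • vecMulVec ν₂ (star ν₂)) * S = (q₂ : ℂ) • ρ₂)
    (ρ11 ρ22 : ℝ) (ρ12 : ℂ)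
    (h11 : (ρ11 : ℂ) = star ν₁ ⬝ᵥ (rho0 q₁ q₂ ρ₁ ρ₂ *ᵥ ν₁))
    (h22 : (ρ22 : ℂ) = star ν₂ ⬝ᵥ (rho0 q₁ q₂ ρ₁ ρ₂ *ᵥ ν₂))
    (h12 : ρ12 = star ν₁ ⬝ᵥ (rho0 q₁ q₂ ρ₁ ρ₂ *ᵥ ν₂))
    (hC₁ : 1 / 2 < C₁) (h12z : ρ12 = 0) :
    ∀ Q ∈ PIset C₁ q₁ q₂ ρ₁ ρ₂, Q < 1 →
      PcorOpt Q q₁ q₂ ρ₁ ρ₂ = ρ11 * C₁ + ρ22 * C₂ - C₁ * Q := by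
  have hC₂ : 1 / 2 < C₂ := lt_of_lt_of_le hC₁ hC12
  set ρ0 := rho0 q₁ q₂ ρ₁ ρ₂ with hρ0def
  set P₁ := vecMulVec ν₁ (star ν₁) with hP₁def
  set P₂ := vecMulVec ν₂ (star ν₂) with hP₂def
  have hP : P₁ + P₂ = 1 := resolution' ν₁ ν₂ hν₁ hν₂ hν₁₂
  set ρb₁ : Matrix (Fin 2) (Fin 2) ℂ := (C₁ : ℂ) • P₁ + ((1 - C₂ : ℝ) : ℂ) • P₂ with hρb₁def
  set ρb₂ : Matrix (Fin 2) (Fin 2) ℂ := ((1 - C₁ : ℝ) : ℂ) • P₁ + (C₂ : ℂ) • P₂ with hρb₂def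
  set Λ : Matrix (Fin 2) (Fin 2) ℂ := (C₁ : ℂ) • P₁ + (C₂ : ℂ) • P₂ with hΛdef
  set V : ℝ := C₁ * ρ11 + C₂ * ρ22 with hVdef
  have hP₁psd := psd_vmv' ν₁
  have hP₂psd := psd_vmv' ν₂
  -- differences are PSD
  have hD0 : (Λ - (C₁ : ℂ) • (1 : Matrix (Fin 2) (Fin 2) ℂ)).PosSemidef := by
    have he : Λ - (C₁ : ℂ) • (1 : Matrix (Fin 2) (Fin 2) ℂ) = ((C₂ - C₁ : ℝ) : ℂ) • P₂ := by
      rw [← hP]; push_cast; module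
    rw [he]; exact psd_smul' hP₂psd (by linarith)
  have hD1 : (Λ - ρb₁).PosSemidef := by
    have he : Λ - ρb₁ = ((2 * C₂ - 1 : ℝ) : ℂ) • P₂ := by
      rw [hΛdef, hρb₁def]; push_cast; module
    rw [he]; exact psd_smul' hP₂psd (by linarith)
  have hD2 : (Λ - ρb₂).PosSemidef := by
    have he : Λ - ρb₂ = ((2 * C₁ - 1 : ℝ) : ℂ) • P₁ := by
      rw [hΛdef, hρb₂def]; push_cast; module
    rw [he]; exact psd_smul' hP₁psd (by linarith)
  have key : ∀ (X N : Matrix (Fin 2) (Fin 2) ℂ), (Λ - X).PosSemidef → N.PosSemidef →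
      (Matrix.trace (X * N)).re ≤ (Matrix.trace (Λ * N)).re := by
    intro X N hXN hN
    have h := trace_mul_psd_re_nonneg' hXN hN
    have he : Matrix.trace ((Λ - X) * N) = Matrix.trace (Λ * N) - Matrix.trace (X * N) := by
      rw [Matrix.sub_mul, Matrix.trace_sub]
    rw [he, Complex.sub_re] at h
    linarith
  have hNpsd : ∀ M : Matrix (Fin 2) (Fin 2) ℂ, M.PosSemidef → (S * M * S).PosSemidef := by
    intro M hM
    have := hM.conjTranspose_mul_mul_same S
    rwa [hS.isHermitian.eq] at this
  -- trace identities
  have hcyc : ∀ A M : Matrix (Fin 2) (Fin 2) ℂ,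
      Matrix.trace (A * (S * M * S)) = Matrix.trace ((S * A * S) * M) := by
    intro A M
    rw [show A * (S * M * S) = (A * S * M) * S from by simp only [Matrix.mul_assoc],
      Matrix.trace_mul_comm,
      show S * (A * S * M) = (S * A * S) * M from by simp only [Matrix.mul_assoc]]
  have ht0 : ∀ M₀ : Matrix (Fin 2) (Fin 2) ℂ,
      (Matrix.trace (((C₁ : ℂ) • (1 : Matrix (Fin 2) (Fin 2) ℂ)) * (S * M₀ * S))).re
        = C₁ * PIof q₁ q₂ ρ₁ ρ₂ M₀ := by
    intro M₀
    rw [hcyc, Matrix.mul_smul, Matrix.smul_mul, Matrix.mul_one, hSS, Matrix.smul_mul,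
      Matrix.trace_smul]
    simp [PIof, Complex.re_ofReal_mul]
    left; rfl
  have ht1 : ∀ M₁ : Matrix (Fin 2) (Fin 2) ℂ,
      (Matrix.trace (ρb₁ * (S * M₁ * S))).re = q₁ * (Matrix.trace (ρ₁ * M₁)).re := by
    intro M₁
    rw [hcyc, hbar₁, Matrix.smul_mul, Matrix.trace_smul]
    simp [Complex.re_ofReal_mul]
  have ht2 : ∀ M₂ : Matrix (Fin 2) (Fin 2) ℂ,
      (Matrix.trace (ρb₂ * (S * M₂ * S))).re = q₂ * (Matrix.trace (ρ₂ * M₂)).re := by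
    intro M₂
    rw [hcyc, hbar₂, Matrix.smul_mul, Matrix.trace_smul]
    simp [Complex.re_ofReal_mul]
  have htΛρ0 : (Matrix.trace (Λ * ρ0)).re = V := by
    rw [hΛdef, Matrix.add_mul, Matrix.smul_mul, Matrix.smul_mul, Matrix.trace_add,
      Matrix.trace_smul, Matrix.trace_smul, hP₁def, hP₂def, trace_vmv_mul', trace_vmv_mul',
      ← h11, ← h22]
    push_cast
    simp [hVdef]
  -- upper bound
  have hub : ∀ M₀ M₁ M₂ : Matrix (Fin 2) (Fin 2) ℂ, IsPOVM M₀ M₁ M₂ →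
      PbarCor C₁ q₁ q₂ ρ₁ ρ₂ M₀ M₁ M₂ ≤ V := by
    intro M₀ M₁ M₂ ⟨h0, h1, h2, hsum⟩
    have e0 := key _ _ hD0 (hNpsd M₀ h0)
    have e1 := key _ _ hD1 (hNpsd M₁ h1)
    have e2 := key _ _ hD2 (hNpsd M₂ h2)
    rw [ht0] at e0
    rw [ht1] at e1
    rw [ht2] at e2
    have hsum2 : S * M₀ * S + S * M₁ * S + S * M₂ * S = ρ0 := by
      rw [← hSS]
      calc S * M₀ * S + S * M₁ * S + S * M₂ * S = S * (M₀ + M₁ + M₂) * S := by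
            simp only [Matrix.mul_add, Matrix.add_mul]
        _ = S * S := by rw [hsum, Matrix.mul_one]
    have esum : (Matrix.trace (Λ * (S * M₀ * S))).re + (Matrix.trace (Λ * (S * M₁ * S))).re
        + (Matrix.trace (Λ * (S * M₂ * S))).re = V := by
      have : Matrix.trace (Λ * (S * M₀ * S)) + Matrix.trace (Λ * (S * M₁ * S))
          + Matrix.trace (Λ * (S * M₂ * S)) = Matrix.trace (Λ * ρ0) := by
        rw [← Matrix.trace_add, ← Matrix.trace_add, ← Matrix.mul_add, ← Matrix.mul_add, hsum2]
      calc (Matrix.trace (Λ * (S * M₀ * S))).re + (Matrix.trace (Λ * (S * M₁ * S))).re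
            + (Matrix.trace (Λ * (S * M₂ * S))).re
          = (Matrix.trace (Λ * (S * M₀ * S)) + Matrix.trace (Λ * (S * M₁ * S))
            + Matrix.trace (Λ * (S * M₂ * S))).re := by simp [Complex.add_re]
        _ = (Matrix.trace (Λ * ρ0)).re := by rw [this]
        _ = V := htΛρ0
    simp only [PbarCor, Pcor]
    linarith
  -- invertibility of S
  have hdetS : IsUnit S.det := by
    have h1 : IsUnit ρ0.det := (Matrix.isUnit_iff_isUnit_det ρ0).mp hρ0.isUnit
    have h2 : S.det * S.det = ρ0.det := by rw [← Matrix.det_mul, hSS]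
    exact isUnit_of_mul_isUnit_left (h2 ▸ h1)
  have hST : S * S⁻¹ = 1 := Matrix.mul_nonsing_inv S hdetS
  have hTS : S⁻¹ * S = 1 := Matrix.nonsing_inv_mul S hdetS
  have hTh : S⁻¹ᴴ = S⁻¹ := by rw [Matrix.conjTranspose_nonsing_inv, hS.isHermitian.eq]
  have hρ11 : 0 ≤ ρ11 := by
    have := hρ0.posSemidef.re_dotProduct_nonneg ν₁
    rw [← h11] at this; simpa using this
  have hρ22 : 0 ≤ ρ22 := by
    have := hρ0.posSemidef.re_dotProduct_nonneg ν₂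
    rw [← h22] at this; simpa using this
  have hherm : ∀ i j, (starRingEnd ℂ) (ρ0 i j) = ρ0 j i := by
    intro i j
    have := congrFun (congrFun hρ0.1 j) i
    simpa [Matrix.conjTranspose_apply] using this
  have h12' : star ν₁ ⬝ᵥ (ρ0 *ᵥ ν₂) = 0 := by rw [← h12]; exact h12z
  have h21 : star ν₂ ⬝ᵥ (ρ0 *ᵥ ν₁) = 0 := by
    have e : star ν₂ ⬝ᵥ (ρ0 *ᵥ ν₁) = (starRingEnd ℂ) (star ν₁ ⬝ᵥ (ρ0 *ᵥ ν₂)) := by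
      simp only [dotProduct, mulVec, Fin.sum_univ_two, map_add, _root_.map_mul, Pi.star_apply,
        RCLike.star_def, Complex.conj_conj, hherm]
      ring
    rw [e, h12', map_zero]
  have h21ortho : star ν₂ ⬝ᵥ ν₁ = 0 := by
    have := congrArg (starRingEnd ℂ) hν₁₂
    simpa [dotProduct, Fin.sum_univ_two, mul_comm] using this
  have hdecomp : ρ0 = (ρ11 : ℂ) • P₁ + (ρ22 : ℂ) • P₂ := by
    have h1 : (P₁ + P₂) * ρ0 * (P₁ + P₂) = ρ0 := by rw [hP, Matrix.one_mul, Matrix.mul_one]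
    calc ρ0 = (P₁ + P₂) * ρ0 * (P₁ + P₂) := h1.symm
      _ = (star ν₁ ⬝ᵥ (ρ0 *ᵥ ν₁)) • vecMulVec ν₁ (star ν₁)
          + (star ν₁ ⬝ᵥ (ρ0 *ᵥ ν₂)) • vecMulVec ν₁ (star ν₂)
          + ((star ν₂ ⬝ᵥ (ρ0 *ᵥ ν₁)) • vecMulVec ν₂ (star ν₁)
          + (star ν₂ ⬝ᵥ (ρ0 *ᵥ ν₂)) • vecMulVec ν₂ (star ν₂)) := by
            rw [hP₁def, hP₂def]
            simp only [Matrix.add_mul, Matrix.mul_add, vmv_mul_mul_vmv']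
            abel
      _ = (ρ11 : ℂ) • P₁ + (ρ22 : ℂ) • P₂ := by
            rw [← h11, ← h22, h12', h21, hP₁def, hP₂def]
            simp
  set T := S⁻¹ with hTdef
  set Ma₁ : Matrix (Fin 2) (Fin 2) ℂ := (ρ11 : ℂ) • (T * P₁ * T) with hMa₁def
  set Ma₂ : Matrix (Fin 2) (Fin 2) ℂ := (ρ22 : ℂ) • (T * P₂ * T) with hMa₂def
  have hMa₁psd : Ma₁.PosSemidef := by
    refine psd_smul' ?_ hρ11
    have := hP₁psd.conjTranspose_mul_mul_same T
    rwa [hTh] at this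
  have hMa₂psd : Ma₂.PosSemidef := by
    refine psd_smul' ?_ hρ22
    have := hP₂psd.conjTranspose_mul_mul_same T
    rwa [hTh] at this
  have hMasum : (0 : Matrix (Fin 2) (Fin 2) ℂ) + Ma₁ + Ma₂ = 1 := by
    have e1 : Ma₁ + Ma₂ = T * ((ρ11 : ℂ) • P₁ + (ρ22 : ℂ) • P₂) * T := by
      rw [hMa₁def, hMa₂def]
      simp only [Matrix.mul_add, Matrix.add_mul, Matrix.mul_smul, Matrix.smul_mul]
    rw [zero_add, e1, ← hdecomp, ← hSS]
    calc T * (S * S) * T = T * (S * (S * T)) := by simp only [Matrix.mul_assoc]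
      _ = (T * S) * (S * T) := by simp only [Matrix.mul_assoc]
      _ = 1 := by rw [hTS, hST, Matrix.one_mul]
  have hpovm : IsPOVM 0 Ma₁ Ma₂ := ⟨Matrix.PosSemidef.zero, hMa₁psd, hMa₂psd, hMasum⟩
  have hattain : ∀ A P : Matrix (Fin 2) (Fin 2) ℂ,
      Matrix.trace ((S * A * S) * (T * P * T)) = Matrix.trace (A * P) := by
    intro A P
    calc Matrix.trace ((S * A * S) * (T * P * T))
        = Matrix.trace (S * (A * ((S * T) * (P * T)))) := by simp only [Matrix.mul_assoc]
      _ = Matrix.trace (S * (A * (P * T))) := by rw [hST, Matrix.one_mul]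
      _ = Matrix.trace ((A * (P * T)) * S) := Matrix.trace_mul_comm _ _
      _ = Matrix.trace (A * (P * (T * S))) := by simp only [Matrix.mul_assoc]
      _ = Matrix.trace (A * P) := by rw [hTS, Matrix.mul_one]
  have htrb₁ : Matrix.trace (ρb₁ * P₁) = (C₁ : ℂ) := by
    rw [hρb₁def, hP₁def, hP₂def, Matrix.add_mul, Matrix.smul_mul, Matrix.smul_mul,
      vmv_mul_vmv', vmv_mul_vmv', hν₁, h21ortho]
    simp [Matrix.trace_smul, trace_vmv', hν₁]
    have h := hν₁
    simp only [dotProduct, Fin.sum_univ_two, Pi.star_apply, RCLike.star_def] at h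
    linear_combination (C₁ : ℂ) * h
  have htrb₂ : Matrix.trace (ρb₂ * P₂) = (C₂ : ℂ) := by
    rw [hρb₂def, hP₁def, hP₂def, Matrix.add_mul, Matrix.smul_mul, Matrix.smul_mul,
      vmv_mul_vmv', vmv_mul_vmv', hν₁₂, hν₂]
    simp [Matrix.trace_smul, trace_vmv', hν₂]
    have h := hν₂
    simp only [dotProduct, Fin.sum_univ_two, Pi.star_apply, RCLike.star_def] at h
    linear_combination (C₂ : ℂ) * h
  have hval1 : q₁ * (Matrix.trace (ρ₁ * Ma₁)).re = ρ11 * C₁ := by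
    have e : (q₁ : ℂ) * Matrix.trace (ρ₁ * Ma₁) = (ρ11 : ℂ) * (C₁ : ℂ) := by
      calc (q₁ : ℂ) * Matrix.trace (ρ₁ * Ma₁) = Matrix.trace (((q₁ : ℂ) • ρ₁) * Ma₁) := by
            rw [Matrix.smul_mul, Matrix.trace_smul, smul_eq_mul]
        _ = Matrix.trace ((S * ρb₁ * S) * Ma₁) := by rw [hbar₁]
        _ = (ρ11 : ℂ) * Matrix.trace ((S * ρb₁ * S) * (T * P₁ * T)) := by
            rw [hMa₁def, Matrix.mul_smul, Matrix.trace_smul, smul_eq_mul]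
        _ = (ρ11 : ℂ) * (C₁ : ℂ) := by rw [hattain, htrb₁]
    have e2 := congrArg Complex.re e
    rw [Complex.re_ofReal_mul] at e2
    rw [e2, ← Complex.ofReal_mul]
    simp
  have hval2 : q₂ * (Matrix.trace (ρ₂ * Ma₂)).re = ρ22 * C₂ := by
    have e : (q₂ : ℂ) * Matrix.trace (ρ₂ * Ma₂) = (ρ22 : ℂ) * (C₂ : ℂ) := by
      calc (q₂ : ℂ) * Matrix.trace (ρ₂ * Ma₂) = Matrix.trace (((q₂ : ℂ) • ρ₂) * Ma₂) := by
            rw [Matrix.smul_mul, Matrix.trace_smul, smul_eq_mul]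
        _ = Matrix.trace ((S * ρb₂ * S) * Ma₂) := by rw [hbar₂]
        _ = (ρ22 : ℂ) * Matrix.trace ((S * ρb₂ * S) * (T * P₂ * T)) := by
            rw [hMa₂def, Matrix.mul_smul, Matrix.trace_smul, smul_eq_mul]
        _ = (ρ22 : ℂ) * (C₂ : ℂ) := by rw [hattain, htrb₂]
    have e2 := congrArg Complex.re e
    rw [Complex.re_ofReal_mul] at e2
    rw [e2, ← Complex.ofReal_mul]
    simp
  have hPbarVal : PbarCor C₁ q₁ q₂ ρ₁ ρ₂ 0 Ma₁ Ma₂ = V := by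
    simp only [PbarCor, Pcor, PIof, ← hρ0def]
    rw [hval1, hval2, Matrix.mul_zero, Matrix.trace_zero]
    simp [hVdef]
    ring
  have hPbarOpt : PbarOpt C₁ q₁ q₂ ρ₁ ρ₂ = V := by
    rw [PbarOpt]
    apply IsGreatest.csSup_eq
    constructor
    · exact ⟨0, Ma₁, Ma₂, hpovm, hPbarVal⟩
    · rintro x ⟨N₀, N₁, N₂, hp, rfl⟩
      exact hub _ _ _ hp
  rintro Q ⟨M₀, M₁, M₂, hp, hopt, hPI⟩ hQ1
  rw [hPbarOpt] at hopt
  have hPcorQ : Pcor q₁ q₂ ρ₁ ρ₂ M₁ M₂ = V - C₁ * Q := by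
    have e : PbarCor C₁ q₁ q₂ ρ₁ ρ₂ M₀ M₁ M₂ = C₁ * Q + Pcor q₁ q₂ ρ₁ ρ₂ M₁ M₂ := by
      simp only [PbarCor, hPI]
    rw [e] at hopt
    linarith
  have hfin : PcorOpt Q q₁ q₂ ρ₁ ρ₂ = V - C₁ * Q := by
    rw [PcorOpt]
    apply IsGreatest.csSup_eq
    constructor
    · exact ⟨M₀, M₁, M₂, hp, hPI, hPcorQ⟩
    · rintro x ⟨N₀, N₁, N₂, hpn, hPIn, rfl⟩
      have h := hub _ _ _ hpn
      simp only [PbarCor, hPIn] at h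
      linarith
  rw [hfin, hVdef]
  ring

end FRIR
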